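/- Let A be a nonzero commutative ring and f1, f2 homogeneous in A[X1,X2] of degrees d1 ≤ d2 forming a regular sequence, δ = d1+d2−2. Define D(ν) for 0 ≤ ν ≤ d1−1 as the determinant of the (δ−ν+2)×(δ−ν+2) matrix whose first d2−ν columns are coefficient columns of X1^{d2−ν−1}f1,...,X2^{d2−ν−1}f1, next d1−ν columns are coefficient columns of f2-multiples, next ν+1 columns are coefficient columns of a generic form h of degree δ−2ν+1 with coefficients W, and whose last row is (0,...,0,X1^ν,...,X2^ν). Then m^{δ−ν+1} D(ν) ⊆ (f1, f2) in A[X1,X2,W], where m = (X1,X2); hence writing D(ν) = Σ_{|β|=ν} D_β(X1,X2) W^β, each D_β is an inertia form of f1, f2 of degree ν. -/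

import Mathlib

open MvPolynomial

noncomputable section

/-- The square matrix defining the inertia form `D(ν)` of Theorem `prop-cas3`:
its rows (except the last) are indexed by the monomials of degree `δ − ν + 1` in
`X1, X2`; the first `d2 − ν` columns contain the coefficients of
`X1^{d2−ν−1}f1, …, X2^{d2−ν−1}f1`, the next `d1 − ν` columns those of
`X1^{d1−ν−1}f2, …, X2^{d1−ν−1}f2`, and the last `ν + 1` columns those of
`X1^ν h, …, X2^ν h` for the generic form
`h = W0 X1^{δ−2ν+1} + ⋯ + W_{δ−2ν+1} X2^{δ−2ν+1}`; the last row is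
`(0, …, 0, X1^ν, …, X2^ν)`.  Entries live in `A[X1,X2][W0,…,W_{δ−2ν+1}]`, realized as
`MvPolynomial (Fin (d1+d2−2ν)) (MvPolynomial (Fin 2) A)`. -/
def Dmatrix {A : Type*} [CommRing A] (d1 d2 ν : ℕ)
    (hd1 : 2 ≤ d1) (hd12 : d1 ≤ d2) (hν : ν + 1 ≤ d1) (U V : ℕ → A) :
    Matrix (Fin (d1 + d2 - ν + 1)) (Fin (d1 + d2 - ν + 1))
      (MvPolynomial (Fin (d1 + d2 - 2 * ν)) (MvPolynomial (Fin 2) A)) :=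
  Matrix.of fun i j =>
    if (i : ℕ) < d1 + d2 - ν then
      if (j : ℕ) < d2 - ν then
        (if (j : ℕ) ≤ (i : ℕ) ∧ (i : ℕ) ≤ (j : ℕ) + d1 then
          C (C (U ((i : ℕ) - (j : ℕ)))) else 0)
      else if (j : ℕ) < (d2 - ν) + (d1 - ν) then
        (if (j : ℕ) - (d2 - ν) ≤ (i : ℕ) ∧ (i : ℕ) ≤ (j : ℕ) - (d2 - ν) + d2 then
          C (C (V ((i : ℕ) - ((j : ℕ) - (d2 - ν))))) else 0)
      else
        (if hc : (j : ℕ) - (d2 - ν) - (d1 - ν) ≤ (i : ℕ) ∧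
            (i : ℕ) ≤ (j : ℕ) - (d2 - ν) - (d1 - ν) + (d1 + d2 - 2 * ν - 1) then
          X ⟨(i : ℕ) - ((j : ℕ) - (d2 - ν) - (d1 - ν)), by omega⟩ else 0)
    else
      if (j : ℕ) < (d2 - ν) + (d1 - ν) then 0
      else
        C ((X 0 : MvPolynomial (Fin 2) A) ^ (ν - ((j : ℕ) - (d2 - ν) - (d1 - ν))) *
           (X 1 : MvPolynomial (Fin 2) A) ^ ((j : ℕ) - (d2 - ν) - (d1 - ν)))

section Helpers

variable {R : Type*} [CommRing R]

lemma aux_sum_ite (c N : ℕ) :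
    ∑ i ∈ Finset.range N, (if c ≤ i then (1 : ℕ) else 0) = N - c := by
  induction N with
  | zero => simp
  | succ n ih =>
    rw [Finset.sum_range_succ, ih]
    by_cases h : c ≤ n <;> simp [h] <;> omega

lemma det_mem_of_row_mem {n : Type*} [DecidableEq n] [Fintype n]
    (M : Matrix n n R) (I : Ideal R) (i0 : n) (h : ∀ j, M i0 j ∈ I) : M.det ∈ I := by
  rw [Matrix.det_apply]
  refine Ideal.sum_mem _ fun σ _ => ?_
  have hp : (∏ j, M (σ j) j) ∈ I := by
    rw [← Finset.prod_erase_mul _ _ (Finset.mem_univ (σ.symm i0))]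
    exact I.mul_mem_left _ (by simpa using h (σ.symm i0))
  rcases Int.units_eq_one_or (Equiv.Perm.sign σ) with hs | hs <;> rw [hs]
  · simpa using hp
  · simpa using I.neg_mem hp

lemma span_pair_pow_mul_mem (I : Ideal R) (x y : R) :
    ∀ (n : ℕ) (z : R), (∀ a b : ℕ, a + b = n → x ^ a * y ^ b * z ∈ I) →
      ∀ g ∈ Ideal.span {x, y} ^ n, g * z ∈ I := by
  intro n
  induction n with
  | zero =>
    intro z h g _
    have hz : z ∈ I := by simpa using h 0 0 rfl
    exact I.mul_mem_left g hz
  | succ n ih =>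
    intro z h g hg
    rw [pow_succ] at hg
    refine Submodule.mul_induction_on hg (fun a ha b hb => ?_)
      (fun p q hp hq => by simpa [add_mul] using I.add_mem hp hq)
    induction hb using Submodule.span_induction with
    | mem r hr =>
      rcases hr with hr | hr
      · rw [hr]
        have := ih (x * z) (fun a' b' hab => by
          have h2 := h (a' + 1) b' (by omega)
          have : x ^ a' * y ^ b' * (x * z) = x ^ (a' + 1) * y ^ b' * z := by ring
          rwa [this]) a ha
        rwa [mul_assoc]
      · simp only [Set.mem_singleton_iff] at hr
        rw [hr]
        have := ih (y * z) (fun a' b' hab => by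
          have h2 := h a' (b' + 1) (by omega)
          have : x ^ a' * y ^ b' * (y * z) = x ^ a' * y ^ (b' + 1) * z := by ring
          rwa [this]) a ha
        rwa [mul_assoc]
    | zero => simpa using I.zero_mem
    | add u v hu hv hu' hv' => simpa [mul_add, add_mul] using I.add_mem hu' hv'
    | smul r u hu hu' =>
      have : a * (r • u) * z = r * (a * u * z) := by simp [smul_eq_mul]; ring
      rw [this]
      exact I.mul_mem_left _ hu'

lemma coeff_prod_homogeneous {σ τ : Type*} [DecidableEq τ] {A : Type*} [CommRing A] {ι : Type*}
    [DecidableEq ι] (s : Finset ι) (f : ι → MvPolynomial τ (MvPolynomial σ A)) (d : ι → ℕ)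
    (h : ∀ i ∈ s, ∀ β, (MvPolynomial.coeff β (f i)).IsHomogeneous (d i)) :
    ∀ β, (MvPolynomial.coeff β (∏ i ∈ s, f i)).IsHomogeneous (∑ i ∈ s, d i) := by
  induction s using Finset.induction with
  | empty =>
    intro β
    rw [Finset.prod_empty, Finset.sum_empty, MvPolynomial.coeff_one]
    split
    · exact isHomogeneous_one _ _
    · exact isHomogeneous_zero _ _ _
  | @insert a s ha ih =>
    intro β
    rw [Finset.prod_insert ha, Finset.sum_insert ha, MvPolynomial.coeff_mul]
    refine MvPolynomial.IsHomogeneous.sum _ _ _ fun x _ => ?_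
    exact (h a (Finset.mem_insert_self a s) x.1).mul
      (ih (fun i hi β' => h i (Finset.mem_insert_of_mem hi) β') x.2)

lemma coeff_mem_span {σ τ : Type*} {A : Type*} [CommRing A]
    (f1 f2 : MvPolynomial σ A) (q : MvPolynomial τ (MvPolynomial σ A))
    (hq : q ∈ Ideal.span {C f1, C f2}) (β : τ →₀ ℕ) :
    MvPolynomial.coeff β q ∈ Ideal.span {f1, f2} := by
  rw [show ({C f1, C f2} : Set (MvPolynomial τ (MvPolynomial σ A)))
      = {C f1, C f2} from rfl] at hq
  rw [Ideal.span, Submodule.mem_span_pair] at hq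
  obtain ⟨a, b, rfl⟩ := hq
  rw [Ideal.span, Submodule.mem_span_pair]
  refine ⟨MvPolynomial.coeff β a, MvPolynomial.coeff β b, ?_⟩
  simp only [smul_eq_mul, MvPolynomial.coeff_add]
  rw [mul_comm a (C f1), mul_comm b (C f2), MvPolynomial.coeff_C_mul,
    MvPolynomial.coeff_C_mul]
  ring

lemma hom_coeff_C {σ τ : Type*} {A : Type*} [CommRing A] {n : ℕ}
    (s : MvPolynomial σ A) (hs : s.IsHomogeneous n) (γ : τ →₀ ℕ) :
    (MvPolynomial.coeff γ (C s : MvPolynomial τ (MvPolynomial σ A))).IsHomogeneous n := by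
  classical
  rw [MvPolynomial.coeff_C]
  split_ifs
  · exact hs
  · exact isHomogeneous_zero _ _ _

lemma hom_coeff_X {σ τ : Type*} {A : Type*} [CommRing A] (t : τ) (γ : τ →₀ ℕ) :
    (MvPolynomial.coeff γ (X t : MvPolynomial τ (MvPolynomial σ A))).IsHomogeneous 0 := by
  classical
  rw [MvPolynomial.coeff_X']
  split_ifs
  · exact isHomogeneous_one _ _
  · exact isHomogeneous_zero _ _ _

end Helpers

/-- generic form of degree n2-1 with coefficients the W-variables -/
def gform (A : Type*) [CommRing A] (n2 : ℕ) :
    MvPolynomial (Fin n2) (MvPolynomial (Fin 2) A) :=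
  ∑ t ∈ Finset.range n2, if ht : t < n2 then
    X ⟨t, ht⟩ * C ((X 0 : MvPolynomial (Fin 2) A) ^ (n2 - 1 - t) *
      (X 1 : MvPolynomial (Fin 2) A) ^ t) else 0


set_option maxHeartbeats 1000000

/-- Let `f1 = Σ U_i X1^{d1−i}X2^i`, `f2 = Σ V_i X1^{d2−i}X2^i` be
homogeneous of degrees `2 ≤ d1 ≤ d2` forming a regular sequence, `δ = d1+d2−2` and
`0 ≤ ν ≤ d1 − 1`.  With `D(ν)` the determinant of the matrix `Dmatrix` above,
`m^{δ−ν+1} · D(ν) ⊆ (f1, f2)` in `A[X1,X2][W]`, where `m = (X1,X2)` — and moreover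
`D(ν)` is homogeneous of degree `ν` in `W`, and writing `D(ν) = Σ_β D_β(X1,X2) W^β`,
each coefficient `D_β` is an inertia form of `f1, f2` of degree `ν` (homogeneous of
degree `ν` and annihilated modulo `(f1,f2)` by a power of `m`). -/
theorem stmt14 {A : Type*} [CommRing A] [Nontrivial A] (d1 d2 ν : ℕ)
    (hd1 : 2 ≤ d1) (hd12 : d1 ≤ d2) (hν : ν + 1 ≤ d1) (U V : ℕ → A)
    (f1 f2 : MvPolynomial (Fin 2) A)
    (hf1 : f1 = ∑ i ∈ Finset.range (d1 + 1), C (U i) * X 0 ^ (d1 - i) * X 1 ^ i)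
    (hf2 : f2 = ∑ i ∈ Finset.range (d2 + 1), C (V i) * X 0 ^ (d2 - i) * X 1 ^ i)
    (hreg : RingTheory.Sequence.IsRegular (MvPolynomial (Fin 2) A) [f1, f2]) :
    (∀ g ∈ (Ideal.span
        {(C (X 0) : MvPolynomial (Fin (d1 + d2 - 2 * ν)) (MvPolynomial (Fin 2) A)),
         C (X 1)}) ^ (d1 + d2 - ν - 1),
      g * (Dmatrix d1 d2 ν hd1 hd12 hν U V).det ∈ Ideal.span {C f1, C f2}) ∧
    (Dmatrix d1 d2 ν hd1 hd12 hν U V).det.IsHomogeneous ν ∧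
    ∀ β : Fin (d1 + d2 - 2 * ν) →₀ ℕ,
      (coeff β (Dmatrix d1 d2 ν hd1 hd12 hν U V).det).IsHomogeneous ν ∧
      ∃ k : ℕ, ∀ g ∈ (Ideal.span {(X 0 : MvPolynomial (Fin 2) A), X 1}) ^ k,
        g * coeff β (Dmatrix d1 d2 ν hd1 hd12 hν U V).det ∈ Ideal.span {f1, f2} := by
  classical
  have hν2 : 1 ≤ d1 + d2 - 2 * ν := by omega
  set M := Dmatrix d1 d2 ν hd1 hd12 hν U V with hMdef
  set I : Ideal (MvPolynomial (Fin (d1 + d2 - 2 * ν)) (MvPolynomial (Fin 2) A)) :=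
    Ideal.span {C f1, C f2} with hIdef
  set w : Fin (d1 + d2 - ν + 1) →
      MvPolynomial (Fin (d1 + d2 - 2 * ν)) (MvPolynomial (Fin 2) A) := fun i =>
    if (i : ℕ) < d1 + d2 - ν then
      C ((X 0 : MvPolynomial (Fin 2) A) ^ (d1 + d2 - ν - 1 - (i : ℕ)) *
        (X 1 : MvPolynomial (Fin 2) A) ^ (i : ℕ))
    else - gform A (d1 + d2 - 2 * ν) with hwdef
  have KL : ∀ j, (∑ i, w i * M i j) ∈ I := by
    intro j
    have hjlt := j.isLt
    have hwc : ∀ i : Fin (d1 + d2 - ν), w i.castSucc =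
        C ((X 0 : MvPolynomial (Fin 2) A) ^ (d1 + d2 - ν - 1 - (i : ℕ)) *
          (X 1 : MvPolynomial (Fin 2) A) ^ (i : ℕ)) := by
      intro i
      simp only [hwdef]
      rw [if_pos (by simpa using i.isLt)]
      simp only [Fin.coe_castSucc]
    have hwl : w (Fin.last (d1 + d2 - ν)) = - gform A (d1 + d2 - 2 * ν) := by
      simp only [hwdef]
      rw [if_neg (by simp)]
    rw [Fin.sum_univ_castSucc]
    by_cases hj1 : (j : ℕ) < d2 - ν
    · -- f1 column
      have hMl : M (Fin.last (d1 + d2 - ν)) j = 0 := by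
        show Dmatrix d1 d2 ν hd1 hd12 hν U V _ j = 0
        simp only [Dmatrix, Matrix.of_apply]
        rw [if_neg (by simp), if_pos (by omega)]
      have hMe : ∀ i : Fin (d1 + d2 - ν), M i.castSucc j =
          (if (j : ℕ) ≤ (i : ℕ) ∧ (i : ℕ) ≤ (j : ℕ) + d1 then
            C (C (U ((i : ℕ) - (j : ℕ)))) else 0) := by
        intro i
        show Dmatrix d1 d2 ν hd1 hd12 hν U V _ j = _
        simp only [Dmatrix, Matrix.of_apply]
        rw [if_pos (by simpa using i.isLt), if_pos hj1]
        simp only [Fin.coe_castSucc]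
      set F : ℕ → MvPolynomial (Fin (d1 + d2 - 2 * ν)) (MvPolynomial (Fin 2) A) := fun i =>
        C ((X 0 : MvPolynomial (Fin 2) A) ^ (d1 + d2 - ν - 1 - i) *
          (X 1 : MvPolynomial (Fin 2) A) ^ i) *
        (if (j : ℕ) ≤ i ∧ i ≤ (j : ℕ) + d1 then
          C (C (U (i - (j : ℕ)))) else 0) with hF
      rw [hwl, hMl, mul_zero, add_zero]
      have hstep : ∑ i : Fin (d1 + d2 - ν), w i.castSucc * M i.castSucc j
          = C ((X 0 : MvPolynomial (Fin 2) A) ^ (d2 - ν - 1 - (j : ℕ)) *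
              (X 1 : MvPolynomial (Fin 2) A) ^ (j : ℕ)) * C f1 := by
        calc ∑ i : Fin (d1 + d2 - ν), w i.castSucc * M i.castSucc j
            = ∑ i ∈ Finset.range (d1 + d2 - ν), F i := by
              rw [← Fin.sum_univ_eq_sum_range]
              exact Finset.sum_congr rfl fun i _ => by rw [hwc i, hMe i]
          _ = ∑ i ∈ Finset.Icc (j : ℕ) ((j : ℕ) + d1), F i := by
              refine (Finset.sum_subset (fun x hx => ?_) (fun x _ hxn => ?_)).symm
              · simp only [Finset.mem_Icc, Finset.mem_range] at *; omega
              · simp only [hF]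
                rw [if_neg (by simp only [Finset.mem_Icc] at hxn; omega), mul_zero]
          _ = ∑ k ∈ Finset.range (d1 + 1), F ((j : ℕ) + k) := by
              rw [← Finset.Ico_add_one_right_eq_Icc, Finset.sum_Ico_eq_sum_range,
                show (j : ℕ) + d1 + 1 - (j : ℕ) = d1 + 1 from by omega]
          _ = C ((X 0 : MvPolynomial (Fin 2) A) ^ (d2 - ν - 1 - (j : ℕ)) *
              (X 1 : MvPolynomial (Fin 2) A) ^ (j : ℕ)) * C f1 := by
              rw [hf1, map_sum, Finset.mul_sum]
              refine Finset.sum_congr rfl fun k hk => ?_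
              rw [Finset.mem_range] at hk
              simp only [hF]
              rw [if_pos ⟨Nat.le_add_right _ _, by omega⟩,
                show (j : ℕ) + k - (j : ℕ) = k from by omega]
              rw [← map_mul, ← map_mul]
              congr 1
              rw [show d1 + d2 - ν - 1 - ((j : ℕ) + k) = (d2 - ν - 1 - (j : ℕ)) + (d1 - k)
                  from by omega, pow_add, pow_add]
              ring
      rw [hstep]
      exact I.mul_mem_left _ (Ideal.subset_span (Set.mem_insert _ _))
    · by_cases hj2 : (j : ℕ) < (d2 - ν) + (d1 - ν)
      · -- f2 column
        have hMl : M (Fin.last (d1 + d2 - ν)) j = 0 := by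
          show Dmatrix d1 d2 ν hd1 hd12 hν U V _ j = 0
          simp only [Dmatrix, Matrix.of_apply]
          rw [if_neg (by simp), if_pos hj2]
        have hMe : ∀ i : Fin (d1 + d2 - ν), M i.castSucc j =
            (if (j : ℕ) - (d2 - ν) ≤ (i : ℕ) ∧ (i : ℕ) ≤ (j : ℕ) - (d2 - ν) + d2 then
              C (C (V ((i : ℕ) - ((j : ℕ) - (d2 - ν))))) else 0) := by
          intro i
          show Dmatrix d1 d2 ν hd1 hd12 hν U V _ j = _
          simp only [Dmatrix, Matrix.of_apply]
          rw [if_pos (by simpa using i.isLt), if_neg hj1, if_pos hj2]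
          simp only [Fin.coe_castSucc]
        set F : ℕ → MvPolynomial (Fin (d1 + d2 - 2 * ν)) (MvPolynomial (Fin 2) A) := fun i =>
          C ((X 0 : MvPolynomial (Fin 2) A) ^ (d1 + d2 - ν - 1 - i) *
            (X 1 : MvPolynomial (Fin 2) A) ^ i) *
          (if (j : ℕ) - (d2 - ν) ≤ i ∧ i ≤ (j : ℕ) - (d2 - ν) + d2 then
            C (C (V (i - ((j : ℕ) - (d2 - ν))))) else 0) with hF
        rw [hwl, hMl, mul_zero, add_zero]
        have hstep : ∑ i : Fin (d1 + d2 - ν), w i.castSucc * M i.castSucc j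
            = C ((X 0 : MvPolynomial (Fin 2) A) ^ (d1 - ν - 1 - ((j : ℕ) - (d2 - ν))) *
                (X 1 : MvPolynomial (Fin 2) A) ^ ((j : ℕ) - (d2 - ν))) * C f2 := by
          calc ∑ i : Fin (d1 + d2 - ν), w i.castSucc * M i.castSucc j
              = ∑ i ∈ Finset.range (d1 + d2 - ν), F i := by
                rw [← Fin.sum_univ_eq_sum_range]
                exact Finset.sum_congr rfl fun i _ => by rw [hwc i, hMe i]
            _ = ∑ i ∈ Finset.Icc ((j : ℕ) - (d2 - ν)) ((j : ℕ) - (d2 - ν) + d2), F i := by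
                refine (Finset.sum_subset (fun x hx => ?_) (fun x _ hxn => ?_)).symm
                · simp only [Finset.mem_Icc, Finset.mem_range] at *; omega
                · simp only [hF]
                  rw [if_neg (by simp only [Finset.mem_Icc] at hxn; omega), mul_zero]
            _ = ∑ k ∈ Finset.range (d2 + 1), F ((j : ℕ) - (d2 - ν) + k) := by
                rw [← Finset.Ico_add_one_right_eq_Icc, Finset.sum_Ico_eq_sum_range,
                  show (j : ℕ) - (d2 - ν) + d2 + 1 - ((j : ℕ) - (d2 - ν)) = d2 + 1 from by omega]
            _ = C ((X 0 : MvPolynomial (Fin 2) A) ^ (d1 - ν - 1 - ((j : ℕ) - (d2 - ν))) *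
                (X 1 : MvPolynomial (Fin 2) A) ^ ((j : ℕ) - (d2 - ν))) * C f2 := by
                rw [hf2, map_sum, Finset.mul_sum]
                refine Finset.sum_congr rfl fun k hk => ?_
                rw [Finset.mem_range] at hk
                simp only [hF]
                rw [if_pos ⟨Nat.le_add_right _ _, by omega⟩,
                  show (j : ℕ) - (d2 - ν) + k - ((j : ℕ) - (d2 - ν)) = k from by omega]
                rw [← map_mul, ← map_mul]
                congr 1
                rw [show d1 + d2 - ν - 1 - ((j : ℕ) - (d2 - ν) + k)
                    = (d1 - ν - 1 - ((j : ℕ) - (d2 - ν))) + (d2 - k) from by omega,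
                  pow_add, pow_add]
                ring
        rw [hstep]
        exact I.mul_mem_left _ (Ideal.subset_span (Set.mem_insert_of_mem _ rfl))
      · -- W column
        push_neg at hj2
        have hcν : (j : ℕ) - (d2 - ν) - (d1 - ν) ≤ ν := by omega
        have hMl : M (Fin.last (d1 + d2 - ν)) j =
            C ((X 0 : MvPolynomial (Fin 2) A) ^ (ν - ((j : ℕ) - (d2 - ν) - (d1 - ν))) *
              (X 1 : MvPolynomial (Fin 2) A) ^ ((j : ℕ) - (d2 - ν) - (d1 - ν))) := by
          show Dmatrix d1 d2 ν hd1 hd12 hν U V _ j = _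
          simp only [Dmatrix, Matrix.of_apply]
          rw [if_neg (by simp), if_neg (by omega)]
        have hMe : ∀ i : Fin (d1 + d2 - ν), M i.castSucc j =
            (if hc : (j : ℕ) - (d2 - ν) - (d1 - ν) ≤ (i : ℕ) ∧
                (i : ℕ) ≤ (j : ℕ) - (d2 - ν) - (d1 - ν) + (d1 + d2 - 2 * ν - 1) then
              X (⟨(i : ℕ) - ((j : ℕ) - (d2 - ν) - (d1 - ν)), by omega⟩ :
                Fin (d1 + d2 - 2 * ν)) else 0) := by
          intro i
          show Dmatrix d1 d2 ν hd1 hd12 hν U V _ j = _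
          simp only [Dmatrix, Matrix.of_apply]
          rw [if_pos (by simpa using i.isLt), if_neg hj1, if_neg (by omega)]
          simp only [Fin.coe_castSucc]
        set F : ℕ → MvPolynomial (Fin (d1 + d2 - 2 * ν)) (MvPolynomial (Fin 2) A) := fun i =>
          C ((X 0 : MvPolynomial (Fin 2) A) ^ (d1 + d2 - ν - 1 - i) *
            (X 1 : MvPolynomial (Fin 2) A) ^ i) *
          (if hc : (j : ℕ) - (d2 - ν) - (d1 - ν) ≤ i ∧
              i ≤ (j : ℕ) - (d2 - ν) - (d1 - ν) + (d1 + d2 - 2 * ν - 1) then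
            X (⟨i - ((j : ℕ) - (d2 - ν) - (d1 - ν)), by omega⟩ :
              Fin (d1 + d2 - 2 * ν)) else 0) with hF
        rw [hwl, hMl]
        have hstep : ∑ i : Fin (d1 + d2 - ν), w i.castSucc * M i.castSucc j
            = gform A (d1 + d2 - 2 * ν) *
              C ((X 0 : MvPolynomial (Fin 2) A) ^ (ν - ((j : ℕ) - (d2 - ν) - (d1 - ν))) *
                (X 1 : MvPolynomial (Fin 2) A) ^ ((j : ℕ) - (d2 - ν) - (d1 - ν))) := by
          calc ∑ i : Fin (d1 + d2 - ν), w i.castSucc * M i.castSucc j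
              = ∑ i ∈ Finset.range (d1 + d2 - ν), F i := by
                rw [← Fin.sum_univ_eq_sum_range]
                exact Finset.sum_congr rfl fun i _ => by rw [hwc i, hMe i]
            _ = ∑ i ∈ Finset.Icc ((j : ℕ) - (d2 - ν) - (d1 - ν))
                  ((j : ℕ) - (d2 - ν) - (d1 - ν) + (d1 + d2 - 2 * ν - 1)), F i := by
                refine (Finset.sum_subset (fun x hx => ?_) (fun x _ hxn => ?_)).symm
                · simp only [Finset.mem_Icc, Finset.mem_range] at *; omega
                · simp only [hF]
                  rw [dif_neg (by simp only [Finset.mem_Icc] at hxn; omega), mul_zero]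
            _ = ∑ k ∈ Finset.range (d1 + d2 - 2 * ν),
                  F ((j : ℕ) - (d2 - ν) - (d1 - ν) + k) := by
                rw [← Finset.Ico_add_one_right_eq_Icc, Finset.sum_Ico_eq_sum_range,
                  show (j : ℕ) - (d2 - ν) - (d1 - ν) + (d1 + d2 - 2 * ν - 1) + 1
                    - ((j : ℕ) - (d2 - ν) - (d1 - ν)) = d1 + d2 - 2 * ν from by omega]
            _ = gform A (d1 + d2 - 2 * ν) *
                C ((X 0 : MvPolynomial (Fin 2) A) ^ (ν - ((j : ℕ) - (d2 - ν) - (d1 - ν))) *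
                  (X 1 : MvPolynomial (Fin 2) A) ^ ((j : ℕ) - (d2 - ν) - (d1 - ν))) := by
                rw [gform, Finset.sum_mul]
                refine Finset.sum_congr rfl fun k hk => ?_
                rw [Finset.mem_range] at hk
                simp only [hF]
                rw [dif_pos ⟨Nat.le_add_right _ _, by omega⟩, dif_pos hk]
                have hfin : (⟨(j : ℕ) - (d2 - ν) - (d1 - ν) + k - ((j : ℕ) - (d2 - ν) - (d1 - ν)),
                    by omega⟩ : Fin (d1 + d2 - 2 * ν)) = ⟨k, hk⟩ :=
                  Fin.ext (show (j : ℕ) - (d2 - ν) - (d1 - ν) + k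
                    - ((j : ℕ) - (d2 - ν) - (d1 - ν)) = k from by omega)
                rw [hfin]
                rw [show d1 + d2 - ν - 1 - ((j : ℕ) - (d2 - ν) - (d1 - ν) + k)
                    = (d1 + d2 - 2 * ν - 1 - k) + (ν - ((j : ℕ) - (d2 - ν) - (d1 - ν)))
                  from by omega, pow_add,
                  show (j : ℕ) - (d2 - ν) - (d1 - ν) + k = k + ((j : ℕ) - (d2 - ν) - (d1 - ν))
                  from by omega, pow_add]
                simp only [map_mul]
                ring
        rw [hstep]
        have : ∀ x y : MvPolynomial (Fin (d1 + d2 - 2 * ν)) (MvPolynomial (Fin 2) A),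
            x * y + -x * y = 0 := fun x y => by ring
        rw [this]
        exact I.zero_mem
  have Claim1 : ∀ a b : ℕ, a + b = d1 + d2 - ν - 1 →
      (C ((X 0 : MvPolynomial (Fin 2) A) ^ a * (X 1 : MvPolynomial (Fin 2) A) ^ b)) * M.det ∈ I := by
    intro a b hab
    set i0 : Fin (d1 + d2 - ν + 1) := ⟨b, by omega⟩ with hi0
    have hw : w i0 = C ((X 0 : MvPolynomial (Fin 2) A) ^ a * (X 1 : MvPolynomial (Fin 2) A) ^ b) := by
      have hb : (i0 : ℕ) = b := rfl
      simp only [hwdef]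
      rw [if_pos (by omega : b < d1 + d2 - ν), show d1 + d2 - ν - 1 - b = a from by omega]
    have hs := Matrix.det_updateRow_sum M i0 w
    rw [smul_eq_mul, hw] at hs
    rw [← hs]
    apply det_mem_of_row_mem _ I i0
    intro j
    rw [Matrix.updateRow_self]
    rw [Finset.sum_apply]
    simp only [Pi.smul_apply, smul_eq_mul]
    exact KL j
  have Part1 : ∀ g ∈ (Ideal.span
      {(C (X 0) : MvPolynomial (Fin (d1 + d2 - 2 * ν)) (MvPolynomial (Fin 2) A)),
       C (X 1)}) ^ (d1 + d2 - ν - 1), g * M.det ∈ I := by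
    intro g hg
    refine span_pair_pow_mul_mem I _ _ _ M.det (fun a b hab => ?_) g hg
    have h1 := Claim1 a b hab
    rwa [map_mul, map_pow, map_pow] at h1
  set L : Fin (d1 + d2 - ν + 1) := ⟨d1 + d2 - ν, by omega⟩ with hLdef
  have hL0 : ∀ jj : Fin (d1 + d2 - ν + 1), (jj : ℕ) < (d2 - ν) + (d1 - ν) → M L jj = 0 := by
    intro jj hjj
    show Dmatrix d1 d2 ν hd1 hd12 hν U V _ jj = 0
    simp only [Dmatrix, Matrix.of_apply]
    rw [if_neg (lt_irrefl _), if_pos hjj]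
  have hLW : ∀ jj : Fin (d1 + d2 - ν + 1), (d2 - ν) + (d1 - ν) ≤ (jj : ℕ) →
      M L jj = C ((X 0 : MvPolynomial (Fin 2) A) ^ (ν - ((jj : ℕ) - (d2 - ν) - (d1 - ν))) *
        (X 1 : MvPolynomial (Fin 2) A) ^ ((jj : ℕ) - (d2 - ν) - (d1 - ν))) := by
    intro jj hjj
    show Dmatrix d1 d2 ν hd1 hd12 hν U V _ jj = _
    simp only [Dmatrix, Matrix.of_apply]
    rw [if_neg (lt_irrefl _), if_neg (by omega)]
  have hrowlt : ∀ i : Fin (d1 + d2 - ν + 1), i ≠ L → (i : ℕ) < d1 + d2 - ν := by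
    intro i hi
    have h := i.isLt
    rcases Nat.lt_or_ge (i : ℕ) (d1 + d2 - ν) with h' | h'
    · exact h'
    · exact absurd (Fin.ext (show (i : ℕ) = d1 + d2 - ν from by omega)) hi
  have hC0 : ∀ (i jj : Fin (d1 + d2 - ν + 1)), (jj : ℕ) < (d2 - ν) + (d1 - ν) →
      (M i jj).IsHomogeneous 0 := by
    intro i jj hjj
    show (Dmatrix d1 d2 ν hd1 hd12 hν U V i jj).IsHomogeneous 0
    simp only [Dmatrix, Matrix.of_apply]
    split_ifs <;> first
      | exact isHomogeneous_C _ _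
      | exact isHomogeneous_zero _ _ _
      | (exfalso; omega)
  have hX1 : ∀ (i jj : Fin (d1 + d2 - ν + 1)), (i : ℕ) < d1 + d2 - ν →
      (d2 - ν) + (d1 - ν) ≤ (jj : ℕ) → (M i jj).IsHomogeneous 1 := by
    intro i jj h1 h2
    show (Dmatrix d1 d2 ν hd1 hd12 hν U V i jj).IsHomogeneous 1
    simp only [Dmatrix, Matrix.of_apply]
    rw [if_pos h1, if_neg (by omega), if_neg (by omega)]
    split_ifs
    · exact isHomogeneous_X _ _
    · exact isHomogeneous_zero _ _ _
  have Part2 : M.det.IsHomogeneous ν := by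
    rw [Matrix.det_apply']
    refine MvPolynomial.IsHomogeneous.sum _ _ _ fun σ _ => ?_
    have hmain : (∏ i, M (σ i) i).IsHomogeneous ν := by
      by_cases hjL : ((σ.symm L : Fin (d1 + d2 - ν + 1)) : ℕ) < (d2 - ν) + (d1 - ν)
      · rw [Finset.prod_eq_zero (Finset.mem_univ (σ.symm L))
          (by rw [Equiv.apply_symm_apply]; exact hL0 _ hjL)]
        exact isHomogeneous_zero _ _ _
      · push_neg at hjL
        have e2 : ∑ jj : Fin (d1 + d2 - ν + 1),
            (if (d2 - ν) + (d1 - ν) ≤ (jj : ℕ) then (1 : ℕ) else 0) = ν + 1 := by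
          rw [Fin.sum_univ_eq_sum_range (fun k => if (d2 - ν) + (d1 - ν) ≤ k then (1 : ℕ) else 0),
            aux_sum_ite]
          omega
        have e3 := Finset.add_sum_erase Finset.univ
          (fun jj : Fin (d1 + d2 - ν + 1) => if (d2 - ν) + (d1 - ν) ≤ (jj : ℕ) then (1 : ℕ) else 0)
          (Finset.mem_univ (σ.symm L))
        have hsum : ∑ jj : Fin (d1 + d2 - ν + 1),
            (if (d2 - ν) + (d1 - ν) ≤ (jj : ℕ) ∧ jj ≠ σ.symm L then (1 : ℕ) else 0) = ν := by
          have e1 : ∀ jj ∈ Finset.univ.erase (σ.symm L),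
              (if (d2 - ν) + (d1 - ν) ≤ (jj : ℕ) ∧ jj ≠ σ.symm L then (1 : ℕ) else 0)
              = (if (d2 - ν) + (d1 - ν) ≤ (jj : ℕ) then (1 : ℕ) else 0) := by
            intro jj hjj
            have hne := Finset.ne_of_mem_erase hjj
            by_cases hc : (d2 - ν) + (d1 - ν) ≤ (jj : ℕ) <;> simp [hc, hne]
          rw [← Finset.add_sum_erase Finset.univ _ (Finset.mem_univ (σ.symm L)),
            if_neg (by simp), Finset.sum_congr rfl e1, zero_add]
          have h4 := e3.trans e2
          simp only [hjL, if_true] at h4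
          omega
        have hp : (∏ i, M (σ i) i).IsHomogeneous (∑ jj : Fin (d1 + d2 - ν + 1),
            (if (d2 - ν) + (d1 - ν) ≤ (jj : ℕ) ∧ jj ≠ σ.symm L then (1 : ℕ) else 0)) := by
          refine MvPolynomial.IsHomogeneous.prod _ _ _ fun jj _ => ?_
          by_cases h2 : jj = σ.symm L
          · rw [if_neg (by simp [h2])]
            rw [h2, Equiv.apply_symm_apply, hLW _ hjL]
            exact isHomogeneous_C _ _
          · by_cases h1 : (d2 - ν) + (d1 - ν) ≤ (jj : ℕ)
            · rw [if_pos ⟨h1, h2⟩]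
              refine hX1 _ _ ?_ h1
              exact hrowlt _ fun hEq => h2 ((Equiv.apply_eq_iff_eq_symm_apply σ).mp hEq)
            · rw [if_neg (fun hc => h1 hc.1)]
              exact hC0 _ _ (by omega)
        rwa [hsum] at hp
    rcases Int.units_eq_one_or (Equiv.Perm.sign σ) with hs | hs <;> rw [hs]
    · simpa using hmain
    · have hcast : ((((-1 : ℤˣ) : ℤ) : MvPolynomial (Fin (d1 + d2 - 2 * ν))
          (MvPolynomial (Fin 2) A))) * (∏ i, M (σ i) i) = -(∏ i, M (σ i) i) := by
        push_cast
        ring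
      rw [hcast]
      exact hmain.neg
  refine ⟨Part1, Part2, ?_⟩
  intro β
  have hC0c : ∀ (i jj : Fin (d1 + d2 - ν + 1)), (jj : ℕ) < (d2 - ν) + (d1 - ν) →
      ∀ γ : Fin (d1 + d2 - 2 * ν) →₀ ℕ, (coeff γ (M i jj)).IsHomogeneous 0 := by
    intro i jj hjj γ
    show (coeff γ (Dmatrix d1 d2 ν hd1 hd12 hν U V i jj)).IsHomogeneous 0
    simp only [Dmatrix, Matrix.of_apply]
    split_ifs <;> first
      | exact hom_coeff_C _ (isHomogeneous_C _ _) _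
      | (rw [MvPolynomial.coeff_zero]; exact isHomogeneous_zero _ _ _)
      | (exfalso; omega)
  have hXc : ∀ (i jj : Fin (d1 + d2 - ν + 1)), (i : ℕ) < d1 + d2 - ν →
      (d2 - ν) + (d1 - ν) ≤ (jj : ℕ) →
      ∀ γ : Fin (d1 + d2 - 2 * ν) →₀ ℕ, (coeff γ (M i jj)).IsHomogeneous 0 := by
    intro i jj h1 h2 γ
    show (coeff γ (Dmatrix d1 d2 ν hd1 hd12 hν U V i jj)).IsHomogeneous 0
    simp only [Dmatrix, Matrix.of_apply]
    rw [if_pos h1, if_neg (by omega), if_neg (by omega)]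
    split_ifs
    · exact hom_coeff_X _ _
    · rw [MvPolynomial.coeff_zero]; exact isHomogeneous_zero _ _ _
  have hQ : (coeff β M.det).IsHomogeneous ν := by
    rw [Matrix.det_apply', MvPolynomial.coeff_sum]
    refine MvPolynomial.IsHomogeneous.sum _ _ _ fun σ _ => ?_
    have hmain : ∀ γ : Fin (d1 + d2 - 2 * ν) →₀ ℕ,
        (coeff γ (∏ i, M (σ i) i)).IsHomogeneous ν := by
      intro γ
      by_cases hjL : ((σ.symm L : Fin (d1 + d2 - ν + 1)) : ℕ) < (d2 - ν) + (d1 - ν)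
      · rw [Finset.prod_eq_zero (Finset.mem_univ (σ.symm L))
            (by rw [Equiv.apply_symm_apply]; exact hL0 _ hjL), MvPolynomial.coeff_zero]
        exact isHomogeneous_zero _ _ _
      · push_neg at hjL
        have hsum : ∑ jj : Fin (d1 + d2 - ν + 1), (if jj = σ.symm L then ν else 0) = ν := by
          rw [Finset.sum_ite_eq']
          simp
        have hp : (coeff γ (∏ i, M (σ i) i)).IsHomogeneous
            (∑ jj : Fin (d1 + d2 - ν + 1), (if jj = σ.symm L then ν else 0)) := by
          refine coeff_prod_homogeneous _ _ _ (fun jj _ γ' => ?_) γ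
          by_cases h2 : jj = σ.symm L
          · rw [if_pos h2, h2, Equiv.apply_symm_apply, hLW _ hjL]
            refine hom_coeff_C _ ?_ _
            have hcb : ((σ.symm L : Fin (d1 + d2 - ν + 1)) : ℕ) - (d2 - ν) - (d1 - ν) ≤ ν := by
              have := (σ.symm L).isLt; omega
            have h := ((isHomogeneous_X A (0 : Fin 2)).pow
                (ν - (((σ.symm L : Fin (d1 + d2 - ν + 1)) : ℕ) - (d2 - ν) - (d1 - ν)))).mul
              ((isHomogeneous_X A (1 : Fin 2)).pow
                (((σ.symm L : Fin (d1 + d2 - ν + 1)) : ℕ) - (d2 - ν) - (d1 - ν)))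
            rwa [show 1 * (ν - (((σ.symm L : Fin (d1 + d2 - ν + 1)) : ℕ) - (d2 - ν) - (d1 - ν)))
                + 1 * (((σ.symm L : Fin (d1 + d2 - ν + 1)) : ℕ) - (d2 - ν) - (d1 - ν)) = ν
              from by omega] at h
          · rw [if_neg h2]
            by_cases h1 : (d2 - ν) + (d1 - ν) ≤ (jj : ℕ)
            · refine hXc _ _ ?_ h1 _
              exact hrowlt _ fun hEq => h2 ((Equiv.apply_eq_iff_eq_symm_apply σ).mp hEq)
            · exact hC0c _ _ (by omega) _
        rwa [hsum] at hp
    rcases Int.units_eq_one_or (Equiv.Perm.sign σ) with hs | hs <;> rw [hs]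
    · simpa using hmain β
    · have hcast : ((((-1 : ℤˣ) : ℤ) : MvPolynomial (Fin (d1 + d2 - 2 * ν))
          (MvPolynomial (Fin 2) A))) * (∏ i, M (σ i) i) = -(∏ i, M (σ i) i) := by
        push_cast
        ring
      rw [hcast, MvPolynomial.coeff_neg]
      exact (hmain β).neg
  refine ⟨hQ, ⟨d1 + d2 - ν - 1, fun g hg => ?_⟩⟩
  have hCg : (C g : MvPolynomial (Fin (d1 + d2 - 2 * ν)) (MvPolynomial (Fin 2) A)) ∈
      (Ideal.span {(C (X 0) : MvPolynomial (Fin (d1 + d2 - 2 * ν)) (MvPolynomial (Fin 2) A)),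
        C (X 1)}) ^ (d1 + d2 - ν - 1) := by
    have h1 := Ideal.mem_map_of_mem (C : MvPolynomial (Fin 2) A →+*
      MvPolynomial (Fin (d1 + d2 - 2 * ν)) (MvPolynomial (Fin 2) A)) hg
    rwa [Ideal.map_pow, Ideal.map_span, Set.image_pair] at h1
  have h2 := Part1 (C g) hCg
  have h3 := coeff_mem_span f1 f2 _ h2 β
  rwa [MvPolynomial.coeff_C_mul] at h3

end
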